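/- Assume ρ = R/M > 1. Then: (i) π(x*) ≥ 1 − ρ^{−1}; (ii) Gap(P₀^lazy) ≥ 1/(c(ρ)·M); and (iii) for every ε ∈ (0, 1/2), τ(P₀^lazy, ε) ≤ c(ρ)·M·log(1/(ε·π_min)). -/

import Mathlib

open Finset

noncomputable section

variable {X : Type*}

/-- Total variation distance between two (finitely supported) distributions. -/
def tvDist [Fintype X] (ζ μ : X → ℝ) : ℝ :=
  ⨆ A : Finset X, |∑ a ∈ A, ζ a - ∑ a ∈ A, μ a|

/-- The lazy version `(P + I)/2` of a transition matrix. -/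
def lazyM [Fintype X] [DecidableEq X] (P : Matrix X X ℝ) : Matrix X X ℝ :=
  (2 : ℝ)⁻¹ • (P + 1)

/-- Mixing time started from `x`. -/
def mixTimeFrom [Fintype X] [DecidableEq X] (P : Matrix X X ℝ) (μ : X → ℝ) (ε : ℝ) (x : X) : ℕ :=
  sInf {t : ℕ | tvDist (fun y => (P ^ t) x y) μ ≤ ε}

/-- Worst-case mixing time. -/
def mixTime [Fintype X] [DecidableEq X] (P : Matrix X X ℝ) (μ : X → ℝ) (ε : ℝ) : ℕ :=
  Finset.univ.sup (mixTimeFrom P μ ε)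

/-- Variational spectral gap of a reversible transition matrix. -/
def specGap [Fintype X] (P : Matrix X X ℝ) (μ : X → ℝ) : ℝ :=
  sInf { r : ℝ | ∃ f : X → ℝ,
    (2⁻¹ * ∑ x, ∑ y, (f x - f y) ^ 2 * μ x * μ y) ≠ 0 ∧
    r = (2⁻¹ * ∑ x, ∑ y, (f x - f y) ^ 2 * P x y * μ x) /
        (2⁻¹ * ∑ x, ∑ y, (f x - f y) ^ 2 * μ x * μ y) }

/-- Restricted spectral gap on `X0`. -/
def restGap [Fintype X] (P : Matrix X X ℝ) (μ : X → ℝ) (X0 : Finset X) : ℝ :=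
  sInf { r : ℝ | ∃ f : X → ℝ,
    0 < (∑ x ∈ X0, ∑ y ∈ X0, (f x - f y) ^ 2 * μ x * μ y) ∧
    r = (∑ x ∈ X0, ∑ y ∈ X0, (f x - f y) ^ 2 * P x y * μ x) /
        (∑ x ∈ X0, ∑ y ∈ X0, (f x - f y) ^ 2 * μ x * μ y) }

/-- `c(ρ) = 4 / (1 - ρ^{-1/2})³`. -/
def cFun (ρ : ℝ) : ℝ := 4 / (1 - ρ ^ (-(2 : ℝ)⁻¹)) ^ 3

/-- Maximum neighborhood size. -/
def Mmax [Fintype X] (N : X → Finset X) : ℕ := Finset.univ.sup fun x => (N x).card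

/-- Minimal value of `π`. -/
def piMin [Fintype X] [Nonempty X] (π : X → ℝ) : ℝ := ⨅ x, π x

/-- `R = min_{x ≠ x*} max_{y ∈ N(x)} π(y)/π(x)`. -/
def Rval [Fintype X] (π : X → ℝ) (N : X → Finset X) (xstar : X) : ℝ :=
  sInf ((fun x => sSup ((fun y => π y / π x) '' (N x : Set X))) '' {x | x ≠ xstar})

/-- Restricted `R|_{X₀}`. -/
def RvalRes [Fintype X] [DecidableEq X] (π : X → ℝ) (N : X → Finset X) (X0 : Finset X)
    (x0star : X) : ℝ :=
  sInf ((fun x => sSup ((fun y => π y / π x) '' ((N x ∩ X0 : Finset X) : Set X))) ''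
    {x | x ∈ X0 ∧ x ≠ x0star})

/-- Random walk Metropolis–Hastings transition matrix. -/
def rwMH [Fintype X] [DecidableEq X] (π : X → ℝ) (N : X → Finset X) : Matrix X X ℝ :=
  Matrix.of fun x y =>
    if y ∈ N x then min (((N x).card : ℝ))⁻¹ (π y / (π x * ((N y).card : ℝ)))
    else if y = x then
      1 - ∑ z ∈ N x, min (((N x).card : ℝ))⁻¹ (π z / (π x * ((N z).card : ℝ)))
    else 0

/-- The clipping function `clip(u, ℓ, L)`. -/
def clip (l L u : ℝ) : ℝ := if u < l then l else if u ≤ L then u else L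

/-- Normalizing constant of the informed proposal. -/
def Zh [Fintype X] (π : X → ℝ) (N : X → Finset X) (l L : ℝ) (x : X) : ℝ :=
  ∑ y ∈ N x, clip l L (π y / π x)

/-- Informed proposal kernel. -/
def Kh [Fintype X] [DecidableEq X] (π : X → ℝ) (N : X → Finset X) (l L : ℝ) (x y : X) : ℝ :=
  (if y ∈ N x then clip l L (π y / π x) else 0) / Zh π N l L x

/-- Informed Metropolis–Hastings transition matrix. -/
def infMH [Fintype X] [DecidableEq X] (π : X → ℝ) (N : X → Finset X) (l L : ℝ) :
    Matrix X X ℝ :=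
  Matrix.of fun x y =>
    if y = x then
      1 - ∑ z ∈ Finset.univ.erase x,
        Kh π N l L x z * min 1 ((π z * Kh π N l L z x) / (π x * Kh π N l L x z))
    else Kh π N l L x y * min 1 ((π y * Kh π N l L y x) / (π x * Kh π N l L x y))

/-- List of consecutive edges of a list of vertices. -/
def edgeList : List X → List (X × X)
  | a :: b :: rest => (a, b) :: edgeList (b :: rest)
  | _ => []

/-- `γ` is a path from `x` to `y` (x ≠ y) with all edges in `E` and no repeated edge. -/
def IsPathIn (E : Finset (X × X)) (x y : X) (γ : List X) : Prop :=
  x ≠ y ∧ γ.head? = some x ∧ γ.getLast? = some y ∧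
    (∀ e ∈ edgeList γ, e ∈ E) ∧ (edgeList γ).Nodup

/-- `Φ(x,y) = Σ_{γ ∈ Γ_E(x,y)} φ(γ)`. -/
def flowBetween (E : Finset (X × X)) (φ : List X → ℝ) (x y : X) : ℝ :=
  ∑' γ : {γ : List X // IsPathIn E x y γ}, φ γ

/-- Flow from `x` to `y` through the edge `e`. -/
def flowBetweenThrough (E : Finset (X × X)) (φ : List X → ℝ) (x y : X) (e : X × X) : ℝ :=
  ∑' γ : {γ : List X // IsPathIn E x y γ ∧ e ∈ edgeList γ}, φ γ

/-- `w`-length of a path. -/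
def wlen (w : X × X → ℝ) (γ : List X) : ℝ := ((edgeList γ).map w).sum

/-- Congestion `A(E, w, φ)`. -/
def congestion [Fintype X] (π : X → ℝ) (P : Matrix X X ℝ) (E : Finset (X × X))
    (w : X × X → ℝ) (φ : List X → ℝ) : ℝ :=
  ⨆ e ∈ E,
    (∑' γ : {γ : List X // (∃ x y, IsPathIn E x y γ) ∧ e ∈ edgeList γ}, wlen w γ * φ γ) /
      (π e.1 * P e.1 e.2 * w e)

/-- `N_S(x) = {x' ∈ N(x) : π(x')/π(x) ≥ S}`. -/
def NS [Fintype X] (π : X → ℝ) (N : X → Finset X) (S : ℝ) (x : X) : Finset X :=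
  (N x).filter fun y => S ≤ π y / π x

/-- Edge set `E_S`. -/
def ES [Fintype X] [DecidableEq X] (π : X → ℝ) (N : X → Finset X) (S : ℝ) : Finset (X × X) :=
  Finset.univ.filter fun e => e.1 ∈ NS π N S e.2 ∨ e.2 ∈ NS π N S e.1

/-- Restricted `N|^S_{X₀}(x)`. -/
def NSres [Fintype X] [DecidableEq X] (π : X → ℝ) (N : X → Finset X) (X0 : Finset X) (S : ℝ)
    (x : X) : Finset X :=
  ((N x) ∩ X0).filter fun y => S ≤ π y / π x

/-- Restricted edge set `E_S⁰`. -/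
def ESres [Fintype X] [DecidableEq X] (π : X → ℝ) (N : X → Finset X) (X0 : Finset X)
    (S : ℝ) : Finset (X × X) :=
  Finset.univ.filter fun e =>
    (e.1 ∈ X0 ∧ e.2 ∈ X0) ∧ (e.1 ∈ NSres π N X0 S e.2 ∨ e.2 ∈ NSres π N X0 S e.1)

end

section MyAux

open Finset

private lemma aux_cs {ι : Type*} (s : Finset ι) (a w : ι → ℝ) (hw : ∀ i ∈ s, 0 < w i) :
    (∑ i ∈ s, a i) ^ 2 ≤ (∑ i ∈ s, w i) * ∑ i ∈ s, a i ^ 2 / w i := by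
  have h := Finset.sum_mul_sq_le_sq_mul_sq s (fun i => Real.sqrt (w i))
      (fun i => a i / Real.sqrt (w i))
  have e1 : ∑ i ∈ s, Real.sqrt (w i) * (a i / Real.sqrt (w i)) = ∑ i ∈ s, a i := by
    refine Finset.sum_congr rfl fun i hi => ?_
    rw [mul_div_cancel₀]
    exact Real.sqrt_ne_zero'.mpr (hw i hi)
  have e2 : ∑ i ∈ s, Real.sqrt (w i) ^ 2 = ∑ i ∈ s, w i := by
    refine Finset.sum_congr rfl fun i hi => Real.sq_sqrt (hw i hi).le
  have e3 : ∑ i ∈ s, (a i / Real.sqrt (w i)) ^ 2 = ∑ i ∈ s, a i ^ 2 / w i := by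
    refine Finset.sum_congr rfl fun i hi => ?_
    rw [div_pow, Real.sq_sqrt (hw i hi).le]
  rw [e1, e2, e3] at h
  exact h

private lemma aux_geom (l : ℝ) (h0 : 0 ≤ l) (h1 : l < 1) (n : ℕ) :
    ∑ j ∈ Finset.range n, l ^ j ≤ (1 - l)⁻¹ := by
  rw [geom_sum_eq (ne_of_lt h1) n]
  have hl : 0 < 1 - l := by linarith
  have e : (l ^ n - 1) / (l - 1) = (1 - l ^ n) * (1 - l)⁻¹ := by
    rw [div_eq_iff (by linarith : l - 1 ≠ 0)]
    have h2 : (1 - l)⁻¹ * (1 - l) = 1 := inv_mul_cancel₀ (ne_of_gt hl)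
    symm
    calc (1 - l ^ n) * (1 - l)⁻¹ * (l - 1)
        = -((1 - l ^ n) * ((1 - l)⁻¹ * (1 - l))) := by ring
      _ = l ^ n - 1 := by rw [h2]; ring
  rw [e]
  have hpow : 0 ≤ l ^ n := pow_nonneg h0 n
  calc (1 - l ^ n) * (1 - l)⁻¹ ≤ 1 * (1 - l)⁻¹ := by
        apply mul_le_mul_of_nonneg_right (by linarith) (inv_nonneg.mpr hl.le)
    _ = (1 - l)⁻¹ := one_mul _

/-- Abstract L² decay + TV bound for a reversible stochastic matrix with a
spectral-gap-type inequality. -/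
private lemma chain_decay {X : Type*} [Fintype X] [DecidableEq X] [Nonempty X]
    (Q : Matrix X X ℝ) (π : X → ℝ) (γ : ℝ)
    (hπpos : ∀ x, 0 < π x) (hπsum : ∑ x, π x = 1)
    (hQnn : ∀ x y, 0 ≤ Q x y) (hQrow : ∀ x, ∑ y, Q x y = 1)
    (hQrev : ∀ x y, π x * Q x y = π y * Q y x)
    (hγ1 : γ ≤ 1)
    (hPSD : ∀ h : X → ℝ,
      ∑ x, π x * (∑ y, Q x y * h y) ^ 2 ≤ ∑ x, π x * (h x * ∑ y, Q x y * h y))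
    (hgap : ∀ h : X → ℝ, (∑ x, π x * h x) = 0 →
      ∑ x, π x * (h x * ∑ y, Q x y * h y) ≤ (1 - γ) * ∑ x, π x * h x ^ 2) :
    ∀ (t : ℕ) (x : X) (A : Finset X),
      |∑ y ∈ A, (Q ^ t) x y - ∑ y ∈ A, π y| ≤
        2⁻¹ * Real.sqrt ((1 - γ) ^ t * (π x)⁻¹) := by
  have hstat : ∀ y, ∑ x, π x * Q x y = π y := by
    intro y
    have : ∑ x, π x * Q x y = ∑ x, π y * Q y x := by
      refine Finset.sum_congr rfl fun x _ => hQrev x y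
    rw [this, ← Finset.mul_sum, hQrow, mul_one]
  set app : (X → ℝ) → (X → ℝ) := fun h x => ∑ y, Q x y * h y with happdef
  have happ_mean : ∀ h : X → ℝ, ∑ x, π x * app h x = ∑ x, π x * h x := by
    intro h
    calc ∑ x, π x * app h x = ∑ x, ∑ y, π x * Q x y * h y := by
          refine Finset.sum_congr rfl fun x _ => ?_
          rw [happdef]; simp only []
          rw [Finset.mul_sum]
          exact Finset.sum_congr rfl fun y _ => by ring
      _ = ∑ y, (∑ x, π x * Q x y) * h y := by
          rw [Finset.sum_comm]
          exact Finset.sum_congr rfl fun y _ => by rw [Finset.sum_mul]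
      _ = ∑ x, π x * h x := by
          refine Finset.sum_congr rfl fun y _ => by rw [hstat]
  have h1γ : 0 ≤ 1 - γ := by linarith
  have hdecay : ∀ h : X → ℝ, (∑ x, π x * h x) = 0 → ∀ t : ℕ,
      ∑ x, π x * (app^[t] h x) ^ 2 ≤ (1 - γ) ^ t * ∑ x, π x * h x ^ 2 := by
    intro h hmean t
    induction t with
    | zero => simp
    | succ t ih =>
      have hmean_t : ∑ x, π x * (app^[t] h) x = 0 := by
        clear ih
        induction t with
        | zero => simpa using hmean
        | succ t ih2 =>
          rw [Function.iterate_succ_apply']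
          rw [happ_mean (app^[t] h)]
          exact ih2
      have step : ∑ x, π x * (app^[t+1] h x) ^ 2 ≤
          (1 - γ) * ∑ x, π x * (app^[t] h x) ^ 2 := by
        have e : ∀ x, app^[t+1] h x = app (app^[t] h) x := by
          intro x; rw [Function.iterate_succ_apply']
        calc ∑ x, π x * (app^[t+1] h x) ^ 2
            = ∑ x, π x * (∑ y, Q x y * (app^[t] h) y) ^ 2 := by
              refine Finset.sum_congr rfl fun x _ => by rw [e x]
          _ ≤ ∑ x, π x * ((app^[t] h) x * ∑ y, Q x y * (app^[t] h) y) :=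
              hPSD (app^[t] h)
          _ ≤ (1 - γ) * ∑ x, π x * ((app^[t] h) x) ^ 2 := hgap _ hmean_t
      calc ∑ x, π x * (app^[t+1] h x) ^ 2
          ≤ (1 - γ) * ∑ x, π x * (app^[t] h x) ^ 2 := step
        _ ≤ (1 - γ) * ((1 - γ) ^ t * ∑ x, π x * h x ^ 2) :=
            mul_le_mul_of_nonneg_left ih h1γ
        _ = (1 - γ) ^ (t+1) * ∑ x, π x * h x ^ 2 := by ring
  have hpowapp : ∀ (t : ℕ) (h : X → ℝ) (x : X),
      app^[t] h x = ∑ y, (Q ^ t) x y * h y := by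
    intro t
    induction t with
    | zero => intro h x; simp [Matrix.one_apply]
    | succ t ih =>
      intro h x
      rw [Function.iterate_succ_apply']
      have : app (app^[t] h) x = ∑ y, Q x y * (app^[t] h) y := rfl
      rw [this]
      calc ∑ y, Q x y * (app^[t] h) y
          = ∑ y, Q x y * ∑ z, (Q ^ t) y z * h z := by
            refine Finset.sum_congr rfl fun y _ => by rw [ih]
        _ = ∑ y, ∑ z, Q x y * (Q ^ t) y z * h z := by
            refine Finset.sum_congr rfl fun y _ => by
              rw [Finset.mul_sum]
              exact Finset.sum_congr rfl fun z _ => by ring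
        _ = ∑ z, (∑ y, Q x y * (Q ^ t) y z) * h z := by
            rw [Finset.sum_comm]
            exact Finset.sum_congr rfl fun z _ => by rw [Finset.sum_mul]
        _ = ∑ y, (Q ^ (t+1)) x y * h y := by
            refine Finset.sum_congr rfl fun z _ => by
              rw [pow_succ' Q t, Matrix.mul_apply]
  have hrevpow : ∀ (t : ℕ) (x y : X), π x * (Q ^ t) x y = π y * (Q ^ t) y x := by
    intro t
    induction t with
    | zero =>
      intro x y
      by_cases h : x = y
      · subst h; rfl
      · simp [Matrix.one_apply, h, Ne.symm h]
    | succ t ih =>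
      intro x y
      have L : π x * (Q ^ (t+1)) x y = ∑ z, π x * ((Q ^ t) x z * Q z y) := by
        rw [pow_succ, Matrix.mul_apply, Finset.mul_sum]
      have Rr : π y * (Q ^ (t+1)) y x = ∑ z, π y * (Q y z * (Q ^ t) z x) := by
        rw [pow_succ' Q t, Matrix.mul_apply, Finset.mul_sum]
      rw [L, Rr]
      refine Finset.sum_congr rfl fun z _ => ?_
      have e1 : π x * ((Q ^ t) x z * Q z y) = (π x * (Q ^ t) x z) * Q z y := by ring
      rw [e1, ih x z]
      have e2 : π z * (Q ^ t) z x * Q z y = ((π z * Q z y) * (Q ^ t) z x) := by ring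
      rw [e2, hQrev z y]
      ring
  have hrowpow : ∀ (t : ℕ) (x : X), ∑ y, (Q ^ t) x y = 1 := by
    intro t
    induction t with
    | zero => intro x; simp [Matrix.one_apply]
    | succ t ih =>
      intro x
      calc ∑ y, (Q ^ (t+1)) x y = ∑ y, ∑ z, (Q ^ t) x z * Q z y := by
            refine Finset.sum_congr rfl fun y _ => by rw [pow_succ, Matrix.mul_apply]
        _ = ∑ z, (Q ^ t) x z * ∑ y, Q z y := by
            rw [Finset.sum_comm]
            exact Finset.sum_congr rfl fun z _ => by rw [Finset.mul_sum]
        _ = ∑ z, (Q ^ t) x z := by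
            refine Finset.sum_congr rfl fun z _ => by rw [hQrow, mul_one]
        _ = 1 := ih x
  intro t x A
  set f₀ : X → ℝ := fun y => (if y = x then (π x)⁻¹ else 0) - 1 with hf₀
  have hπx := hπpos x
  have hmean0 : ∑ y, π y * f₀ y = 0 := by
    rw [hf₀]
    simp only [mul_sub, mul_ite, mul_zero, mul_one]
    rw [Finset.sum_sub_distrib, Finset.sum_ite_eq' Finset.univ x (fun y => π y * (π x)⁻¹)]
    simp [hπsum, mul_inv_cancel₀ (ne_of_gt hπx)]
  have hnorm : ∑ y, π y * f₀ y ^ 2 ≤ (π x)⁻¹ := by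
    have hexp : ∀ y, π y * f₀ y ^ 2 =
        (if y = x then (π x)⁻¹ * (π y * (π x)⁻¹) else 0) - 2 * (π y * f₀ y) - π y := by
      intro y
      simp only [hf₀]
      by_cases h : y = x
      · rw [if_pos h, if_pos h]; ring
      · rw [if_neg h, if_neg h]; ring
    rw [Finset.sum_congr rfl fun y _ => hexp y]
    rw [Finset.sum_sub_distrib, Finset.sum_sub_distrib,
      Finset.sum_ite_eq' Finset.univ x (fun y => (π x)⁻¹ * (π y * (π x)⁻¹))]
    rw [← Finset.mul_sum, hmean0, hπsum]
    rw [if_pos (Finset.mem_univ x)]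
    have e : (π x)⁻¹ * (π x * (π x)⁻¹) = (π x)⁻¹ := by
      field_simp
    rw [e]
    linarith
  -- identity: π y * app^[t] f₀ y = (Q^t) x y - π y
  have hid : ∀ y, π y * (app^[t] f₀) y = (Q ^ t) x y - π y := by
    intro y
    have key : ∑ z, (Q ^ t) y z * f₀ z = (Q ^ t) y x * (π x)⁻¹ - 1 := by
      have hterm : ∀ z, (Q ^ t) y z * f₀ z =
          (if z = x then (Q ^ t) y z * (π x)⁻¹ else 0) - (Q ^ t) y z := by
        intro z
        simp only [hf₀]
        by_cases h : z = x
        · rw [if_pos h, if_pos h]; ring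
        · rw [if_neg h, if_neg h]; ring
      rw [Finset.sum_congr rfl fun z _ => hterm z, Finset.sum_sub_distrib,
        Finset.sum_ite_eq' Finset.univ x (fun z => (Q ^ t) y z * (π x)⁻¹),
        hrowpow t y, if_pos (Finset.mem_univ x)]
    rw [hpowapp t f₀ y, key]
    have hx' : π x ≠ 0 := ne_of_gt hπx
    rw [mul_sub, mul_one, ← mul_assoc, hrevpow t y x]
    have e : π x * (Q ^ t) x y * (π x)⁻¹ = (Q ^ t) x y := by
      field_simp
    rw [e]
  -- TV bound
  have habs : ∑ y, |(Q ^ t) x y - π y| ≤ Real.sqrt ((1 - γ) ^ t * (π x)⁻¹) := by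
    have hC : (∑ y, |(Q ^ t) x y - π y|) ^ 2 ≤ (1 - γ) ^ t * (π x)⁻¹ := by
      have e : ∀ y, |(Q ^ t) x y - π y| = π y * |(app^[t] f₀) y| := by
        intro y
        rw [← hid y, abs_mul, abs_of_pos (hπpos y)]
      rw [Finset.sum_congr rfl fun y _ => e y]
      have hcs := Finset.sum_mul_sq_le_sq_mul_sq Finset.univ
        (fun y => Real.sqrt (π y)) (fun y => Real.sqrt (π y) * |(app^[t] f₀) y|)
      have e1 : ∑ y, Real.sqrt (π y) * (Real.sqrt (π y) * |(app^[t] f₀) y|)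
          = ∑ y, π y * |(app^[t] f₀) y| := by
        refine Finset.sum_congr rfl fun y _ => ?_
        rw [← mul_assoc]
        congr 1
        exact Real.mul_self_sqrt (hπpos y).le
      have e2 : ∑ y, Real.sqrt (π y) ^ 2 = (1:ℝ) := by
        rw [Finset.sum_congr rfl fun y _ => Real.sq_sqrt (hπpos y).le, hπsum]
      have e3 : ∑ y, (Real.sqrt (π y) * |(app^[t] f₀) y|) ^ 2
          = ∑ y, π y * ((app^[t] f₀) y) ^ 2 := by
        refine Finset.sum_congr rfl fun y _ => ?_
        rw [mul_pow, Real.sq_sqrt (hπpos y).le, sq_abs]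
      rw [e1, e2, e3, one_mul] at hcs
      calc (∑ y, π y * |(app^[t] f₀) y|) ^ 2
          ≤ ∑ y, π y * ((app^[t] f₀) y) ^ 2 := hcs
        _ ≤ (1 - γ) ^ t * ∑ y, π y * f₀ y ^ 2 := hdecay f₀ hmean0 t
        _ ≤ (1 - γ) ^ t * (π x)⁻¹ :=
            mul_le_mul_of_nonneg_left hnorm (pow_nonneg h1γ t)
    have hnn : 0 ≤ ∑ y, |(Q ^ t) x y - π y| :=
      Finset.sum_nonneg fun y _ => abs_nonneg _
    have hrhsnn : 0 ≤ (1 - γ) ^ t * (π x)⁻¹ :=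
      mul_nonneg (pow_nonneg h1γ t) (inv_pos.mpr hπx).le
    exact (Real.le_sqrt hnn hrhsnn).mpr hC
  -- halving
  have hzero : ∑ y, ((Q ^ t) x y - π y) = 0 := by
    rw [Finset.sum_sub_distrib, hrowpow t x, hπsum, sub_self]
  have hsplit : ∑ y ∈ A, ((Q ^ t) x y - π y) + ∑ y ∈ Finset.univ \ A, ((Q ^ t) x y - π y) = 0 := by
    rw [add_comm, Finset.sum_sdiff (Finset.subset_univ A)]
    exact hzero
  have e4 : ∑ y ∈ A, (Q ^ t) x y - ∑ y ∈ A, π y = ∑ y ∈ A, ((Q ^ t) x y - π y) := by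
    rw [Finset.sum_sub_distrib]
  rw [e4]
  have h1 : |∑ y ∈ A, ((Q ^ t) x y - π y)| ≤ ∑ y ∈ A, |(Q ^ t) x y - π y| :=
    abs_sum_le_sum_abs _ _
  have h2 : |∑ y ∈ A, ((Q ^ t) x y - π y)| ≤ ∑ y ∈ Finset.univ \ A, |(Q ^ t) x y - π y| := by
    have : ∑ y ∈ A, ((Q ^ t) x y - π y) = -∑ y ∈ Finset.univ \ A, ((Q ^ t) x y - π y) := by
      linarith
    rw [this, abs_neg]
    exact abs_sum_le_sum_abs _ _
  have h3 : ∑ y ∈ A, |(Q ^ t) x y - π y| + ∑ y ∈ Finset.univ \ A, |(Q ^ t) x y - π y|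
      = ∑ y, |(Q ^ t) x y - π y| := by
    rw [add_comm, Finset.sum_sdiff (Finset.subset_univ A)]
  have := habs
  linarith

end MyAux
section MyAux2

open Finset

private lemma aux_var {X : Type*} [Fintype X] (π : X → ℝ) (hπsum : ∑ x, π x = 1)
    (u : X → ℝ) :
    2⁻¹ * ∑ x, ∑ y, (u x - u y) ^ 2 * π x * π y
      = (∑ x, π x * u x ^ 2) - (∑ x, π x * u x) ^ 2 := by
  have hinner : ∀ x, ∑ y, (u x - u y) ^ 2 * π x * π y
      = π x * u x ^ 2 * (∑ y, π y) - 2 * (π x * u x) * (∑ y, π y * u y)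
        + π x * (∑ y, π y * u y ^ 2) := by
    intro x
    calc ∑ y, (u x - u y) ^ 2 * π x * π y
        = ∑ y, (π x * u x ^ 2 * π y - 2 * (π x * u x) * (π y * u y)
            + π x * (π y * u y ^ 2)) := Finset.sum_congr rfl fun y _ => by ring
      _ = ∑ y, (π x * u x ^ 2 * π y - 2 * (π x * u x) * (π y * u y))
            + ∑ y, π x * (π y * u y ^ 2) := Finset.sum_add_distrib
      _ = (∑ y, π x * u x ^ 2 * π y) - (∑ y, 2 * (π x * u x) * (π y * u y))
            + ∑ y, π x * (π y * u y ^ 2) := by rw [Finset.sum_sub_distrib]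
      _ = π x * u x ^ 2 * (∑ y, π y) - 2 * (π x * u x) * (∑ y, π y * u y)
            + π x * (∑ y, π y * u y ^ 2) := by
          rw [← Finset.mul_sum, ← Finset.mul_sum, ← Finset.mul_sum]
  rw [Finset.sum_congr rfl fun x _ => hinner x]
  rw [Finset.sum_add_distrib, Finset.sum_sub_distrib]
  rw [← Finset.sum_mul, ← Finset.sum_mul, ← Finset.sum_mul]
  rw [hπsum]
  have e2 : ∑ x, 2 * (π x * u x) = 2 * ∑ x, π x * u x := (Finset.mul_sum _ _ _).symm
  rw [e2]
  ring

private lemma aux_master {X : Type*} [Fintype X] [DecidableEq X] [Nonempty X]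
    (π : X → ℝ) (P : Matrix X X ℝ) (g : X → X) (T : X → ℕ) (xstar : X)
    (Mr ρ l : ℝ)
    (hπpos : ∀ x, 0 < π x) (hπsum : ∑ x, π x = 1)
    (hl0 : 0 < l) (hl1 : l < 1)
    (hmuρ : l⁻¹ * ρ⁻¹ = l)
    (hρinv_pos : 0 < ρ⁻¹)
    (hgfix : g xstar = xstar)
    (hTspec : ∀ x, g^[T x] x = xstar)
    (hTcard : ∀ x, T x < Fintype.card X)
    (hsumpre : ∀ (j : ℕ) (z : X), z ≠ xstar →
      ∑ x ∈ Finset.univ.filter (fun x => g^[j] x = z), π x ≤ (ρ⁻¹) ^ j * π z)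
    (hPnn : ∀ x y, 0 ≤ P x y)
    (hPrev : ∀ x y, π x * P x y = π y * P y x)
    (hPedge : ∀ z, z ≠ xstar → 1 ≤ 2 * Mr * P z (g z))
    (hMpos : 0 < Mr)
    (hπlt : ∀ x, x ≠ xstar → π x < π (g x)) :
    ∀ f : X → ℝ, 2⁻¹ * ∑ x, ∑ y, (f x - f y) ^ 2 * π x * π y ≤
      ((1 - l)⁻¹ * (1 - l)⁻¹ * (2 * Mr)) *
        (2⁻¹ * ∑ x, ∑ y, (f x - f y) ^ 2 * P x y * π x) := by
  intro f
  have h1l : 0 < 1 - l := by linarith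
  have h1linv : 0 ≤ (1 - l)⁻¹ := inv_nonneg.mpr h1l.le
  set d : X → ℝ := fun z => f z - f (g z) with hd
  set D : X → ℝ := fun x => f x - f xstar with hD
  have hdstar : d xstar = 0 := by
    rw [hd]; simp [hgfix]
  -- Step 1 : variance bound
  have step1 : 2⁻¹ * ∑ x, ∑ y, (f x - f y) ^ 2 * π x * π y ≤ ∑ x, π x * D x ^ 2 := by
    have e : ∑ x, ∑ y, (f x - f y) ^ 2 * π x * π y
        = ∑ x, ∑ y, (D x - D y) ^ 2 * π x * π y := by
      refine Finset.sum_congr rfl fun x _ => Finset.sum_congr rfl fun y _ => ?_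
      rw [hD]
      ring_nf
    rw [e, aux_var π hπsum D]
    nlinarith [sq_nonneg (∑ x, π x * D x)]
  -- Step 2 : telescoping
  have htel : ∀ (m : ℕ) (x : X), f x - f (g^[m] x) = ∑ j ∈ Finset.range m, d (g^[j] x) := by
    intro m
    induction m with
    | zero => intro x; simp
    | succ m ih =>
      intro x
      rw [Finset.sum_range_succ, ← ih x, Function.iterate_succ_apply']
      rw [hd]
      ring
  -- Step 3 : Cauchy–Schwarz along the path
  have step3 : ∀ x, D x ^ 2 ≤ (1 - l)⁻¹ * ∑ j ∈ Finset.range (T x), d (g^[j] x) ^ 2 * (l⁻¹) ^ j := by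
    intro x
    have hDx : D x = ∑ j ∈ Finset.range (T x), d (g^[j] x) := by
      show f x - f xstar = ∑ j ∈ Finset.range (T x), d (g^[j] x)
      rw [← hTspec x]
      exact htel (T x) x
    have hcs := aux_cs (Finset.range (T x)) (fun j => d (g^[j] x)) (fun j => l ^ j)
      (fun j _ => pow_pos hl0 j)
    rw [← hDx] at hcs
    have hgeom := aux_geom l hl0.le hl1 (T x)
    have hdiv : ∑ j ∈ Finset.range (T x), d (g^[j] x) ^ 2 / l ^ j
        = ∑ j ∈ Finset.range (T x), d (g^[j] x) ^ 2 * (l⁻¹) ^ j := by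
      refine Finset.sum_congr rfl fun j _ => ?_
      rw [div_eq_mul_inv, inv_pow]
    have hnn : 0 ≤ ∑ j ∈ Finset.range (T x), d (g^[j] x) ^ 2 / l ^ j :=
      Finset.sum_nonneg fun j _ => div_nonneg (sq_nonneg _) (pow_pos hl0 j).le
    calc D x ^ 2 ≤ (∑ j ∈ Finset.range (T x), l ^ j)
          * ∑ j ∈ Finset.range (T x), d (g^[j] x) ^ 2 / l ^ j := hcs
      _ ≤ (1 - l)⁻¹ * ∑ j ∈ Finset.range (T x), d (g^[j] x) ^ 2 / l ^ j :=
          mul_le_mul_of_nonneg_right hgeom hnn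
      _ = (1 - l)⁻¹ * ∑ j ∈ Finset.range (T x), d (g^[j] x) ^ 2 * (l⁻¹) ^ j := by
          rw [hdiv]
  -- Step 4/5 : assemble and swap sums
  set n : ℕ := Fintype.card X with hn
  have step4 : ∑ x, π x * D x ^ 2 ≤
      (1 - l)⁻¹ * ∑ x, ∑ j ∈ Finset.range n, π x * (d (g^[j] x) ^ 2 * (l⁻¹) ^ j) := by
    have hterm : ∀ x, π x * D x ^ 2 ≤
        (1 - l)⁻¹ * ∑ j ∈ Finset.range n, π x * (d (g^[j] x) ^ 2 * (l⁻¹) ^ j) := by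
      intro x
      have h1 : π x * D x ^ 2 ≤ π x * ((1 - l)⁻¹ *
          ∑ j ∈ Finset.range (T x), d (g^[j] x) ^ 2 * (l⁻¹) ^ j) :=
        mul_le_mul_of_nonneg_left (step3 x) (hπpos x).le
      have h2 : ∑ j ∈ Finset.range (T x), π x * (d (g^[j] x) ^ 2 * (l⁻¹) ^ j) ≤
          ∑ j ∈ Finset.range n, π x * (d (g^[j] x) ^ 2 * (l⁻¹) ^ j) := by
        apply Finset.sum_le_sum_of_subset_of_nonneg
        · exact Finset.range_subset_range.mpr (hTcard x).le
        · intro j _ _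
          exact mul_nonneg (hπpos x).le (mul_nonneg (sq_nonneg _)
            (pow_nonneg (inv_nonneg.mpr hl0.le) j))
      calc π x * D x ^ 2
          ≤ π x * ((1 - l)⁻¹ * ∑ j ∈ Finset.range (T x), d (g^[j] x) ^ 2 * (l⁻¹) ^ j) := h1
        _ = (1 - l)⁻¹ * (π x * ∑ j ∈ Finset.range (T x), d (g^[j] x) ^ 2 * (l⁻¹) ^ j) := by
            ring
        _ = (1 - l)⁻¹ * ∑ j ∈ Finset.range (T x), π x * (d (g^[j] x) ^ 2 * (l⁻¹) ^ j) := by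
            rw [Finset.mul_sum]
        _ ≤ (1 - l)⁻¹ * ∑ j ∈ Finset.range n, π x * (d (g^[j] x) ^ 2 * (l⁻¹) ^ j) :=
            mul_le_mul_of_nonneg_left h2 h1linv
    calc ∑ x, π x * D x ^ 2
        ≤ ∑ x, (1 - l)⁻¹ * ∑ j ∈ Finset.range n, π x * (d (g^[j] x) ^ 2 * (l⁻¹) ^ j) :=
          Finset.sum_le_sum fun x _ => hterm x
      _ = (1 - l)⁻¹ * ∑ x, ∑ j ∈ Finset.range n, π x * (d (g^[j] x) ^ 2 * (l⁻¹) ^ j) := by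
          rw [Finset.mul_sum]
  have step5 : ∑ x, ∑ j ∈ Finset.range n, π x * (d (g^[j] x) ^ 2 * (l⁻¹) ^ j) ≤
      (1 - l)⁻¹ * ∑ z, π z * d z ^ 2 := by
    rw [Finset.sum_comm]
    have hj : ∀ j : ℕ, ∑ x, π x * (d (g^[j] x) ^ 2 * (l⁻¹) ^ j) ≤
        ∑ z, d z ^ 2 * π z * l ^ j := by
      intro j
      have hfib := Finset.sum_fiberwise Finset.univ (fun x => g^[j] x)
        (fun x => π x * (d (g^[j] x) ^ 2 * (l⁻¹) ^ j))
      rw [← hfib]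
      apply Finset.sum_le_sum
      intro z _
      have hz_eq : ∀ x ∈ Finset.univ.filter (fun x => g^[j] x = z),
          π x * (d (g^[j] x) ^ 2 * (l⁻¹) ^ j) = π x * (d z ^ 2 * (l⁻¹) ^ j) := by
        intro x hx
        rw [(Finset.mem_filter.mp hx).2]
      rw [Finset.sum_congr rfl hz_eq]
      by_cases hzs : z = xstar
      · have : ∀ x ∈ Finset.univ.filter (fun x => g^[j] x = z),
            π x * (d z ^ 2 * (l⁻¹) ^ j) = 0 := by
          intro x _
          rw [hzs, hdstar]
          ring
        rw [Finset.sum_congr rfl this, Finset.sum_const_zero]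
        have hnn : 0 ≤ d z ^ 2 * π z * l ^ j :=
          mul_nonneg (mul_nonneg (sq_nonneg _) (hπpos z).le) (pow_pos hl0 j).le
        linarith
      · have hpre := hsumpre j z hzs
        calc ∑ x ∈ Finset.univ.filter (fun x => g^[j] x = z), π x * (d z ^ 2 * (l⁻¹) ^ j)
            = (d z ^ 2 * (l⁻¹) ^ j) * ∑ x ∈ Finset.univ.filter (fun x => g^[j] x = z), π x := by
              rw [Finset.mul_sum]
              exact Finset.sum_congr rfl fun x _ => by ring
          _ ≤ (d z ^ 2 * (l⁻¹) ^ j) * ((ρ⁻¹) ^ j * π z) := by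
              exact mul_le_mul_of_nonneg_left hpre (mul_nonneg (sq_nonneg _)
                (pow_nonneg (inv_nonneg.mpr hl0.le) j))
          _ = d z ^ 2 * π z * ((l⁻¹ * ρ⁻¹) ^ j) := by
              rw [mul_pow]
              ring
          _ = d z ^ 2 * π z * l ^ j := by rw [hmuρ]
    calc ∑ j ∈ Finset.range n, ∑ x, π x * (d (g^[j] x) ^ 2 * (l⁻¹) ^ j)
        ≤ ∑ j ∈ Finset.range n, ∑ z, d z ^ 2 * π z * l ^ j :=
          Finset.sum_le_sum fun j _ => hj j
      _ = ∑ z, ∑ j ∈ Finset.range n, d z ^ 2 * π z * l ^ j := Finset.sum_comm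
      _ = ∑ z, (d z ^ 2 * π z) * ∑ j ∈ Finset.range n, l ^ j := by
          refine Finset.sum_congr rfl fun z _ => ?_
          rw [Finset.mul_sum]
      _ ≤ ∑ z, (d z ^ 2 * π z) * (1 - l)⁻¹ := by
          apply Finset.sum_le_sum
          intro z _
          exact mul_le_mul_of_nonneg_left (aux_geom l hl0.le hl1 n)
            (mul_nonneg (sq_nonneg _) (hπpos z).le)
      _ = (1 - l)⁻¹ * ∑ z, π z * d z ^ 2 := by
          rw [Finset.mul_sum]
          exact Finset.sum_congr rfl fun z _ => by ring
  -- Step 6 : energy comparison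
  have step6 : ∑ z, π z * d z ^ 2 ≤
      (2 * Mr) * (2⁻¹ * ∑ x, ∑ y, (f x - f y) ^ 2 * P x y * π x) := by
    have herase : ∑ z ∈ Finset.univ.erase xstar, π z * d z ^ 2 = ∑ z, π z * d z ^ 2 := by
      apply Finset.sum_erase
      rw [hdstar]
      ring
    have hGnn : ∀ p : X × X, 0 ≤ (f p.1 - f p.2) ^ 2 * P p.1 p.2 * π p.1 := fun p =>
      mul_nonneg (mul_nonneg (sq_nonneg _) (hPnn p.1 p.2)) (hπpos p.1).le
    have hsum1 : ∑ p ∈ (Finset.univ.erase xstar).image (fun z => (z, g z)),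
        (f p.1 - f p.2) ^ 2 * P p.1 p.2 * π p.1
        = ∑ z ∈ Finset.univ.erase xstar, (f z - f (g z)) ^ 2 * P z (g z) * π z := by
      rw [Finset.sum_image]
      intro x _ y _ h
      exact (Prod.mk.injEq _ _ _ _).mp h |>.1
    have hsum2 : ∑ p ∈ (Finset.univ.erase xstar).image (fun z => (g z, z)),
        (f p.1 - f p.2) ^ 2 * P p.1 p.2 * π p.1
        = ∑ z ∈ Finset.univ.erase xstar, (f (g z) - f z) ^ 2 * P (g z) z * π (g z) := by
      rw [Finset.sum_image]
      intro x _ y _ h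
      exact (Prod.mk.injEq _ _ _ _).mp h |>.2
    have hflip : ∀ z, (f (g z) - f z) ^ 2 * P (g z) z * π (g z)
        = (f z - f (g z)) ^ 2 * P z (g z) * π z := by
      intro z
      linear_combination (-(f z - f (g z)) ^ 2) * hPrev z (g z)
    have hdisj : Disjoint ((Finset.univ.erase xstar).image (fun z => (z, g z)))
        ((Finset.univ.erase xstar).image (fun z => (g z, z))) := by
      rw [Finset.disjoint_left]
      rintro p hp1 hp2
      obtain ⟨z, hz, hz2⟩ := Finset.mem_image.mp hp1
      obtain ⟨w, hw, hw2⟩ := Finset.mem_image.mp hp2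
      have hzne : z ≠ xstar := (Finset.mem_erase.mp hz).1
      have hwne : w ≠ xstar := (Finset.mem_erase.mp hw).1
      rw [← hw2] at hz2
      have h1 : z = g w := ((Prod.mk.injEq _ _ _ _).mp hz2).1
      have h2 : g z = w := ((Prod.mk.injEq _ _ _ _).mp hz2).2
      have hlt1 := hπlt z hzne
      have hlt2 := hπlt w hwne
      rw [h2] at hlt1
      rw [← h1] at hlt2
      linarith
    have hunion : ∑ p ∈ ((Finset.univ.erase xstar).image (fun z => (z, g z)))
          ∪ ((Finset.univ.erase xstar).image (fun z => (g z, z))),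
        (f p.1 - f p.2) ^ 2 * P p.1 p.2 * π p.1
        = 2 * ∑ z ∈ Finset.univ.erase xstar, (f z - f (g z)) ^ 2 * P z (g z) * π z := by
      rw [Finset.sum_union hdisj, hsum1, hsum2]
      rw [Finset.sum_congr rfl fun z _ => hflip z]
      ring
    have hsubset : ∑ p ∈ ((Finset.univ.erase xstar).image (fun z => (z, g z)))
          ∪ ((Finset.univ.erase xstar).image (fun z => (g z, z))),
        (f p.1 - f p.2) ^ 2 * P p.1 p.2 * π p.1
        ≤ ∑ p ∈ Finset.univ ×ˢ Finset.univ, (f p.1 - f p.2) ^ 2 * P p.1 p.2 * π p.1 := by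
      apply Finset.sum_le_sum_of_subset_of_nonneg
      · intro p _
        exact Finset.mem_product.mpr ⟨Finset.mem_univ _, Finset.mem_univ _⟩
      · intro p _ _
        exact hGnn p
    have hprod : ∑ p ∈ Finset.univ ×ˢ Finset.univ, (f p.1 - f p.2) ^ 2 * P p.1 p.2 * π p.1
        = ∑ x, ∑ y, (f x - f y) ^ 2 * P x y * π x :=
      Finset.sum_product Finset.univ Finset.univ _
    have hkey : 2 * ∑ z ∈ Finset.univ.erase xstar, (f z - f (g z)) ^ 2 * P z (g z) * π z
        ≤ ∑ x, ∑ y, (f x - f y) ^ 2 * P x y * π x := by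
      rw [← hunion, ← hprod]
      exact hsubset
    have hterm : ∀ z ∈ Finset.univ.erase xstar, π z * d z ^ 2 ≤
        (2 * Mr) * ((f z - f (g z)) ^ 2 * P z (g z) * π z) := by
      intro z hz
      have hzne : z ≠ xstar := (Finset.mem_erase.mp hz).1
      have hnn : 0 ≤ d z ^ 2 * π z := mul_nonneg (sq_nonneg _) (hπpos z).le
      calc π z * d z ^ 2 = d z ^ 2 * π z * 1 := by ring
        _ ≤ d z ^ 2 * π z * (2 * Mr * P z (g z)) :=
            mul_le_mul_of_nonneg_left (hPedge z hzne) hnn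
        _ = (2 * Mr) * ((f z - f (g z)) ^ 2 * P z (g z) * π z) := by
            simp only [hd]
            ring
    calc ∑ z, π z * d z ^ 2 = ∑ z ∈ Finset.univ.erase xstar, π z * d z ^ 2 := herase.symm
      _ ≤ ∑ z ∈ Finset.univ.erase xstar, (2 * Mr) * ((f z - f (g z)) ^ 2 * P z (g z) * π z) :=
          Finset.sum_le_sum hterm
      _ = (2 * Mr) * ∑ z ∈ Finset.univ.erase xstar, (f z - f (g z)) ^ 2 * P z (g z) * π z := by
          rw [Finset.mul_sum]
      _ = Mr * (2 * ∑ z ∈ Finset.univ.erase xstar, (f z - f (g z)) ^ 2 * P z (g z) * π z) := by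
          ring
      _ ≤ Mr * ∑ x, ∑ y, (f x - f y) ^ 2 * P x y * π x :=
          mul_le_mul_of_nonneg_left hkey hMpos.le
      _ = (2 * Mr) * (2⁻¹ * ∑ x, ∑ y, (f x - f y) ^ 2 * P x y * π x) := by ring
  -- assemble everything
  calc 2⁻¹ * ∑ x, ∑ y, (f x - f y) ^ 2 * π x * π y
      ≤ ∑ x, π x * D x ^ 2 := step1
    _ ≤ (1 - l)⁻¹ * ∑ x, ∑ j ∈ Finset.range n, π x * (d (g^[j] x) ^ 2 * (l⁻¹) ^ j) := step4
    _ ≤ (1 - l)⁻¹ * ((1 - l)⁻¹ * ∑ z, π z * d z ^ 2) :=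
        mul_le_mul_of_nonneg_left step5 h1linv
    _ ≤ (1 - l)⁻¹ * ((1 - l)⁻¹ *
        ((2 * Mr) * (2⁻¹ * ∑ x, ∑ y, (f x - f y) ^ 2 * P x y * π x))) := by
        apply mul_le_mul_of_nonneg_left _ h1linv
        exact mul_le_mul_of_nonneg_left step6 h1linv
    _ = ((1 - l)⁻¹ * (1 - l)⁻¹ * (2 * Mr)) *
        (2⁻¹ * ∑ x, ∑ y, (f x - f y) ^ 2 * P x y * π x) := by ring

end MyAux2
section MyAux3

open Finset

private lemma aux_dirichlet {X : Type*} [Fintype X] (π : X → ℝ) (P : Matrix X X ℝ)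
    (hProw : ∀ x, ∑ y, P x y = 1) (hPstat : ∀ y, ∑ x, π x * P x y = π y)
    (h : X → ℝ) :
    2⁻¹ * ∑ x, ∑ y, (h x - h y) ^ 2 * P x y * π x
      = (∑ x, π x * h x ^ 2) - ∑ x, π x * (h x * ∑ y, P x y * h y) := by
  have hinner : ∀ x, ∑ y, (h x - h y) ^ 2 * P x y * π x
      = π x * h x ^ 2 * (∑ y, P x y) - 2 * (π x * (h x * ∑ y, P x y * h y))
        + π x * ∑ y, P x y * h y ^ 2 := by
    intro x
    calc ∑ y, (h x - h y) ^ 2 * P x y * π x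
        = ∑ y, (π x * h x ^ 2 * P x y - 2 * (π x * (h x * (P x y * h y)))
            + π x * (P x y * h y ^ 2)) := Finset.sum_congr rfl fun y _ => by ring
      _ = ∑ y, (π x * h x ^ 2 * P x y - 2 * (π x * (h x * (P x y * h y))))
            + ∑ y, π x * (P x y * h y ^ 2) := Finset.sum_add_distrib
      _ = (∑ y, π x * h x ^ 2 * P x y) - (∑ y, 2 * (π x * (h x * (P x y * h y))))
            + ∑ y, π x * (P x y * h y ^ 2) := by rw [Finset.sum_sub_distrib]
      _ = π x * h x ^ 2 * (∑ y, P x y) - 2 * (π x * (h x * ∑ y, P x y * h y))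
            + π x * ∑ y, P x y * h y ^ 2 := by
          rw [← Finset.mul_sum, ← Finset.mul_sum, ← Finset.mul_sum, ← Finset.mul_sum,
            ← Finset.mul_sum]
  rw [Finset.sum_congr rfl fun x _ => hinner x]
  have hswap : ∑ x, π x * ∑ y, P x y * h y ^ 2 = ∑ x, π x * h x ^ 2 := by
    calc ∑ x, π x * ∑ y, P x y * h y ^ 2
        = ∑ x, ∑ y, π x * P x y * h y ^ 2 := by
          refine Finset.sum_congr rfl fun x _ => ?_
          rw [Finset.mul_sum]
          exact Finset.sum_congr rfl fun y _ => by ring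
      _ = ∑ y, ∑ x, π x * P x y * h y ^ 2 := Finset.sum_comm
      _ = ∑ y, (∑ x, π x * P x y) * h y ^ 2 := by
          refine Finset.sum_congr rfl fun y _ => ?_
          rw [Finset.sum_mul]
      _ = ∑ y, π y * h y ^ 2 := by
          refine Finset.sum_congr rfl fun y _ => by rw [hPstat]
  rw [Finset.sum_add_distrib, Finset.sum_sub_distrib, hswap]
  have e1 : ∑ x, π x * h x ^ 2 * (∑ y, P x y) = ∑ x, π x * h x ^ 2 := by
    refine Finset.sum_congr rfl fun x _ => by rw [hProw, mul_one]
  rw [e1]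
  have e2 : ∑ x, 2 * (π x * (h x * ∑ y, P x y * h y))
      = 2 * ∑ x, π x * (h x * ∑ y, P x y * h y) := (Finset.mul_sum _ _ _).symm
  rw [e2]
  ring

end MyAux3
set_option maxHeartbeats 4000000 in
theorem stmt0 {X : Type*} [Fintype X] [DecidableEq X] [Nonempty X]
    (π : X → ℝ) (hπpos : ∀ x, 0 < π x) (hπsum : ∑ x, π x = 1)
    (N : X → Finset X)
    (hNirr : ∀ x, x ∉ N x)
    (hNsym : ∀ x y, y ∈ N x → x ∈ N y)
    (hNconn : ∀ x y : X, Relation.ReflTransGen (fun a b => b ∈ N a) x y)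
    (xstar : X) (hxstar : ∀ x, π x ≤ π xstar)
    (ρ : ℝ) (hρdef : ρ = Rval π N xstar / (Mmax N : ℝ)) (hρ : 1 < ρ) :
    1 - ρ⁻¹ ≤ π xstar ∧
    1 / (cFun ρ * (Mmax N : ℝ)) ≤ specGap (lazyM (rwMH π N)) π ∧
    ∀ ε : ℝ, 0 < ε → ε < 1 / 2 →
      (mixTime (lazyM (rwMH π N)) π ε : ℝ) ≤
        cFun ρ * (Mmax N : ℝ) * Real.log (1 / (ε * piMin π)) := by
  
  classical
  have hM0 : Mmax N ≠ 0 := by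
    intro h
    rw [hρdef, h, Nat.cast_zero, div_zero] at hρ
    linarith
  set Mr : ℝ := (Mmax N : ℝ) with hMr
  set R : ℝ := Rval π N xstar with hRdef
  have hρR : ρ = R / Mr := hρdef
  have hρMR : (1:ℝ) < R / Mr := hρR ▸ hρ
  have hx2 : ∃ x : X, x ≠ xstar := by
    by_contra h
    push_neg at h
    have hempty : {x : X | x ≠ xstar} = (∅ : Set X) := by
      ext x; simp [h x]
    have hR0 : R = 0 := by
      rw [hRdef, Rval, hempty]
      simp [Real.sInf_empty]
    rw [hR0, zero_div] at hρMR
    linarith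
  have hMpos : (0:ℝ) < Mr := by
    rw [hMr]
    have : 0 < Mmax N := Nat.pos_of_ne_zero hM0
    exact_mod_cast this
  have hM1 : (1:ℝ) ≤ Mr := by
    rw [hMr]
    have : 1 ≤ Mmax N := Nat.one_le_iff_ne_zero.mpr hM0
    exact_mod_cast this
  have hRM : Mr < R := (one_lt_div hMpos).mp hρMR
  have hR1 : (1:ℝ) < R := lt_of_le_of_lt hM1 hRM
  have hRpos : (0:ℝ) < R := by linarith
  have hρpos : (0:ℝ) < ρ := by linarith
  have hρinv : ρ⁻¹ = Mr / R := by
    rw [hρR, inv_div]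
  have hρinv_lt : ρ⁻¹ < 1 := by
    rw [hρinv, div_lt_one hRpos]; exact hRM
  have hρinv_pos : 0 < ρ⁻¹ := inv_pos.mpr hρpos
  -- the greedy uphill map
  have hker : ∀ x : X, x ≠ xstar → R ≤ sSup ((fun y => π y / π x) '' ↑(N x)) := by
    intro x hx
    apply csInf_le
    · exact Set.Finite.bddBelow (Set.Finite.image _ (Set.toFinite _))
    · exact ⟨x, hx, rfl⟩
  have hNne : ∀ x : X, x ≠ xstar → ∃ y ∈ N x, R * π x ≤ π y := by
    intro x hx
    have hk := hker x hx
    have hSne : ((fun y => π y / π x) '' ↑(N x)).Nonempty := by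
      by_contra hne
      rw [Set.not_nonempty_iff_eq_empty] at hne
      rw [hne, Real.sSup_empty] at hk
      linarith
    obtain ⟨y, hyN, hyv⟩ := Set.Nonempty.csSup_mem hSne (Set.toFinite _)
    refine ⟨y, hyN, ?_⟩
    have hyv' : π y / π x = sSup ((fun y => π y / π x) '' ↑(N x)) := hyv
    have hle : R ≤ π y / π x := by rw [hyv']; exact hk
    calc R * π x ≤ (π y / π x) * π x := mul_le_mul_of_nonneg_right hle (hπpos x).le
      _ = π y := by
          rw [div_mul_eq_mul_div, mul_div_assoc, div_self (ne_of_gt (hπpos x)), mul_one]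
  have hgch : ∀ x : X, ∃ y : X, (x = xstar → y = xstar) ∧
      (x ≠ xstar → y ∈ N x ∧ R * π x ≤ π y) := by
    intro x
    by_cases hx : x = xstar
    · exact ⟨xstar, fun _ => rfl, fun h => absurd hx h⟩
    · obtain ⟨y, h1, h2⟩ := hNne x hx
      exact ⟨y, fun h => absurd h hx, fun _ => ⟨h1, h2⟩⟩
  choose g hgstar hgprop using hgch
  have hgfix : g xstar = xstar := hgstar xstar rfl
  have hgN : ∀ x, x ≠ xstar → g x ∈ N x := fun x hx => (hgprop x hx).1
  have hgup : ∀ x, x ≠ xstar → R * π x ≤ π (g x) := fun x hx => (hgprop x hx).2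
  have hglt : ∀ x, x ≠ xstar → π x < π (g x) := by
    intro x hx
    have h1 := hgup x hx
    have h2 : 1 * π x < R * π x := mul_lt_mul_of_pos_right hR1 (hπpos x)
    rw [one_mul] at h2
    linarith only [h1, h2]
  -- reachability of xstar under g
  have hreach : ∀ x : X, ∃ k, g^[k] x = xstar := by
    have H : ∀ n : ℕ, ∀ x : X, (Finset.univ.filter fun y => π x < π y).card ≤ n →
        ∃ k, g^[k] x = xstar := by
      intro n
      induction n with
      | zero =>
        intro x hcard
        by_cases hx : x = xstar
        · exact ⟨0, by simp [hx]⟩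
        · exfalso
          have hmem : g x ∈ Finset.univ.filter fun y => π x < π y := by
            simp [hglt x hx]
          have := Finset.card_pos.mpr ⟨g x, hmem⟩
          omega
      | succ n ih =>
        intro x hcard
        by_cases hx : x = xstar
        · exact ⟨0, by simp [hx]⟩
        · have hgmem : g x ∈ Finset.univ.filter fun y => π x < π y := by
            simp [hglt x hx]
          have hsub : (Finset.univ.filter fun y => π (g x) < π y) ⊆
              (Finset.univ.filter fun y => π x < π y).erase (g x) := by
            intro y hy
            simp only [Finset.mem_filter, Finset.mem_univ, true_and] at hy
            refine Finset.mem_erase.mpr ⟨?_, ?_⟩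
            · intro he; rw [he] at hy; exact lt_irrefl _ hy
            · simp only [Finset.mem_filter, Finset.mem_univ, true_and]
              exact lt_trans (hglt x hx) hy
          have hle : (Finset.univ.filter fun y => π (g x) < π y).card ≤ n := by
            have h1 := Finset.card_le_card hsub
            rw [Finset.card_erase_of_mem hgmem] at h1
            omega
          obtain ⟨k, hk⟩ := ih (g x) hle
          exact ⟨k + 1, by rw [Function.iterate_succ_apply]; exact hk⟩
    intro x
    exact H _ x le_rfl
  set T : X → ℕ := fun x => Nat.find (hreach x) with hTdef
  have hTspec : ∀ x, g^[T x] x = xstar := fun x => Nat.find_spec (hreach x)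
  have hTmin : ∀ (x : X) (j : ℕ), j < T x → g^[j] x ≠ xstar :=
    fun x j hj => Nat.find_min (hreach x) hj
  have hmono : ∀ (x : X) (i j : ℕ), i < j → j ≤ T x → π (g^[i] x) < π (g^[j] x) := by
    intro x i j hij hj
    induction j with
    | zero => omega
    | succ j ih =>
      have hjT : j < T x := by omega
      have hne : g^[j] x ≠ xstar := hTmin x j hjT
      have hstep : π (g^[j] x) < π (g^[j+1] x) := by
        rw [Function.iterate_succ_apply']
        exact hglt _ hne
      rcases Nat.lt_or_ge i j with h | h
      · exact lt_trans (ih h (by omega)) hstep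
      · have hieq : i = j := by omega
        rw [hieq]; exact hstep
  have hTcard : ∀ x : X, T x < Fintype.card X := by
    intro x
    have hinj : Set.InjOn (fun j => g^[j] x) ↑(Finset.range (T x + 1)) := by
      intro i hi j hj hij
      have hij' : g^[i] x = g^[j] x := hij
      simp only [Finset.coe_range, Set.mem_Iio] at hi hj
      by_contra hne
      rcases Nat.lt_or_ge i j with h | h
      · have := hmono x i j h (by omega)
        rw [hij'] at this; exact lt_irrefl _ this
      · have hji : j < i := by omega
        have := hmono x j i hji (by omega)
        rw [hij'] at this; exact lt_irrefl _ this
    have hcard := Finset.card_le_card_of_injOn (fun j => g^[j] x)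
      (fun a _ => Finset.mem_univ _) hinj
    rw [Finset.card_range, Finset.card_univ] at hcard
    omega
  have hMcard : ∀ y : X, ((N y).card : ℝ) ≤ Mr := by
    intro y
    rw [hMr]
    have : (N y).card ≤ Mmax N :=
      Finset.le_sup (f := fun x => (N x).card) (Finset.mem_univ y)
    exact_mod_cast this
  -- geometric decay of preimage sums
  have hsumpre : ∀ (j : ℕ) (z : X), z ≠ xstar →
      ∑ x ∈ Finset.univ.filter (fun x => g^[j] x = z), π x ≤ (ρ⁻¹) ^ j * π z := by
    intro j
    induction j with
    | zero =>
      intro z hz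
      have heq : Finset.univ.filter (fun x => g^[0] x = z) = {z} := by
        ext x
        rw [Finset.mem_filter]
        simp [Function.iterate_zero_apply]
      rw [heq]
      simp
    | succ j ih =>
      intro z hz
      have hstep1 : ∀ y : X, g^[j] y = z →
          ∑ x ∈ Finset.univ.filter (fun x => g x = y), π x ≤ ρ⁻¹ * π y := by
        intro y hy
        have hxprop : ∀ x ∈ Finset.univ.filter (fun x => g x = y),
            x ∈ N y ∧ π x ≤ π y / R := by
          intro x hx
          simp only [Finset.mem_filter, Finset.mem_univ, true_and] at hx
          have hxne : x ≠ xstar := by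
            intro hxx
            rw [hxx, hgfix] at hx
            have hit : g^[j] xstar = xstar := Function.iterate_fixed hgfix j
            rw [← hx] at hy
            exact hz (by rw [← hy, hit])
          constructor
          · have h1 := hgN x hxne; rw [hx] at h1; exact hNsym x y h1
          · have h1 := hgup x hxne; rw [hx] at h1
            rw [le_div_iff₀ hRpos]
            linarith
        calc ∑ x ∈ Finset.univ.filter (fun x => g x = y), π x
            ≤ ∑ _x ∈ Finset.univ.filter (fun x => g x = y), π y / R :=
              Finset.sum_le_sum (fun x hx => (hxprop x hx).2)
          _ = ((Finset.univ.filter (fun x => g x = y)).card : ℝ) * (π y / R) := by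
              rw [Finset.sum_const, nsmul_eq_mul]
          _ ≤ Mr * (π y / R) := by
              apply mul_le_mul_of_nonneg_right _ (div_nonneg (hπpos y).le hRpos.le)
              have hsub : Finset.univ.filter (fun x => g x = y) ⊆ N y :=
                fun x hx => (hxprop x hx).1
              calc ((Finset.univ.filter (fun x => g x = y)).card : ℝ)
                  ≤ ((N y).card : ℝ) := by exact_mod_cast Finset.card_le_card hsub
                _ ≤ Mr := hMcard y
          _ = ρ⁻¹ * π y := by rw [hρinv]; ring
      have hfib := Finset.sum_fiberwise
        (Finset.univ.filter (fun x => g^[j+1] x = z)) g π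
      rw [← hfib]
      have hbound : ∀ y : X,
          ∑ x ∈ (Finset.univ.filter (fun x => g^[j+1] x = z)).filter (fun x => g x = y), π x
          ≤ if g^[j] y = z then ρ⁻¹ * π y else 0 := by
        intro y
        by_cases hy : g^[j] y = z
        · rw [if_pos hy]
          refine le_trans (Finset.sum_le_sum_of_subset_of_nonneg ?_ ?_) (hstep1 y hy)
          · intro x hx
            simp only [Finset.mem_filter, Finset.mem_univ, true_and] at hx ⊢
            exact hx.2
          · intro x _ _; exact (hπpos x).le
        · rw [if_neg hy]
          have hemp : (Finset.univ.filter (fun x => g^[j+1] x = z)).filter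
              (fun x => g x = y) = ∅ := by
            rw [Finset.filter_eq_empty_iff]
            intro x hx
            simp only [Finset.mem_filter, Finset.mem_univ, true_and] at hx
            intro hgx
            apply hy
            rw [← hgx]
            rw [Function.iterate_succ_apply] at hx
            exact hx
          rw [hemp, Finset.sum_empty]
      calc ∑ y, ∑ x ∈ (Finset.univ.filter (fun x => g^[j+1] x = z)).filter
              (fun x => g x = y), π x
          ≤ ∑ y, (if g^[j] y = z then ρ⁻¹ * π y else 0) :=
            Finset.sum_le_sum (fun y _ => hbound y)
        _ = ∑ y ∈ Finset.univ.filter (fun y => g^[j] y = z), ρ⁻¹ * π y := by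
            rw [Finset.sum_filter]
        _ = ρ⁻¹ * ∑ y ∈ Finset.univ.filter (fun y => g^[j] y = z), π y := by
            rw [Finset.mul_sum]
        _ ≤ ρ⁻¹ * ((ρ⁻¹) ^ j * π z) :=
            mul_le_mul_of_nonneg_left (ih z hz) hρinv_pos.le
        _ = (ρ⁻¹) ^ (j+1) * π z := by ring
  -- Part (i)
  have hpart1 : 1 - ρ⁻¹ ≤ π xstar := by
    have hsum_erase : ∑ x ∈ Finset.univ.erase xstar, π x ≤ ρ⁻¹ := by
      have step1 : ∑ x ∈ Finset.univ.erase xstar, π x ≤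
          R⁻¹ * ∑ x ∈ Finset.univ.erase xstar, π (g x) := by
        rw [Finset.mul_sum]
        refine Finset.sum_le_sum fun x hx => ?_
        have hxne : x ≠ xstar := (Finset.mem_erase.mp hx).1
        have := hgup x hxne
        rw [← mul_le_mul_iff_right₀ hRpos]
        calc R * π x ≤ π (g x) := this
          _ = R * (R⁻¹ * π (g x)) := by
              field_simp
      have step2 : ∑ x ∈ Finset.univ.erase xstar, π (g x) ≤ Mr := by
        have hfib := Finset.sum_fiberwise (Finset.univ.erase xstar) g (fun x => π (g x))
        rw [← hfib]
        have hbnd : ∀ y : X, ∑ x ∈ (Finset.univ.erase xstar).filter (fun x => g x = y), π (g x)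
            ≤ Mr * π y := by
          intro y
          have heq : ∀ x ∈ (Finset.univ.erase xstar).filter (fun x => g x = y), π (g x) = π y := by
            intro x hx
            rw [(Finset.mem_filter.mp hx).2]
          rw [Finset.sum_congr rfl heq, Finset.sum_const, nsmul_eq_mul]
          apply mul_le_mul_of_nonneg_right _ (hπpos y).le
          have hsub : (Finset.univ.erase xstar).filter (fun x => g x = y) ⊆ N y := by
            intro x hx
            have h1 := Finset.mem_filter.mp hx
            have hxne : x ≠ xstar := (Finset.mem_erase.mp h1.1).1
            have := hgN x hxne
            rw [h1.2] at this
            exact hNsym x y this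
          calc (((Finset.univ.erase xstar).filter (fun x => g x = y)).card : ℝ)
              ≤ ((N y).card : ℝ) := by exact_mod_cast Finset.card_le_card hsub
            _ ≤ Mr := by
                rw [hMr]
                have : (N y).card ≤ Mmax N :=
                  Finset.le_sup (f := fun x => (N x).card) (Finset.mem_univ y)
                exact_mod_cast this
        calc ∑ y, ∑ x ∈ (Finset.univ.erase xstar).filter (fun x => g x = y), π (g x)
            ≤ ∑ y, Mr * π y := Finset.sum_le_sum fun y _ => hbnd y
          _ = Mr * ∑ y, π y := by rw [Finset.mul_sum]
          _ = Mr := by rw [hπsum, mul_one]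
      calc ∑ x ∈ Finset.univ.erase xstar, π x
          ≤ R⁻¹ * ∑ x ∈ Finset.univ.erase xstar, π (g x) := step1
        _ ≤ R⁻¹ * Mr := by
            apply mul_le_mul_of_nonneg_left step2 (inv_nonneg.mpr hRpos.le)
        _ = ρ⁻¹ := by rw [hρinv]; ring
    have htot := Finset.add_sum_erase Finset.univ π (Finset.mem_univ xstar)
    rw [hπsum] at htot
    linarith
  -- the Metropolis chain and its basic properties
  set P₀ : Matrix X X ℝ := rwMH π N with hP₀def
  set P : Matrix X X ℝ := lazyM P₀ with hPdef
  have hP0 : ∀ x y, P₀ x y = if y ∈ N x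
      then min (((N x).card : ℝ))⁻¹ (π y / (π x * ((N y).card : ℝ)))
      else if y = x then
        1 - ∑ z ∈ N x, min (((N x).card : ℝ))⁻¹ (π z / (π x * ((N z).card : ℝ)))
      else 0 := fun x y => rfl
  have hmin_nonneg : ∀ x y : X,
      0 ≤ min (((N x).card : ℝ))⁻¹ (π y / (π x * ((N y).card : ℝ))) := by
    intro x y
    apply le_min
    · positivity
    · exact div_nonneg (hπpos y).le (mul_nonneg (hπpos x).le (Nat.cast_nonneg _))
  have hminsum : ∀ x : X,
      ∑ z ∈ N x, min (((N x).card : ℝ))⁻¹ (π z / (π x * ((N z).card : ℝ))) ≤ 1 := by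
    intro x
    rcases Finset.eq_empty_or_nonempty (N x) with hNx | hNx
    · rw [hNx, Finset.sum_empty]; norm_num
    · have hcpos : (0:ℝ) < ((N x).card : ℝ) := by
        exact_mod_cast Finset.card_pos.mpr hNx
      calc ∑ z ∈ N x, min (((N x).card : ℝ))⁻¹ (π z / (π x * ((N z).card : ℝ)))
          ≤ ∑ _z ∈ N x, (((N x).card : ℝ))⁻¹ :=
            Finset.sum_le_sum fun z _ => min_le_left _ _
        _ = ((N x).card : ℝ) * (((N x).card : ℝ))⁻¹ := by
            rw [Finset.sum_const, nsmul_eq_mul]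
        _ = 1 := mul_inv_cancel₀ (ne_of_gt hcpos)
  have hP0nn : ∀ x y, 0 ≤ P₀ x y := by
    intro x y
    rw [hP0]
    by_cases h1 : y ∈ N x
    · rw [if_pos h1]; exact hmin_nonneg x y
    · rw [if_neg h1]
      by_cases h2 : y = x
      · rw [if_pos h2]
        linarith [hminsum x]
      · rw [if_neg h2]
  have hP0row : ∀ x, ∑ y, P₀ x y = 1 := by
    intro x
    have hsplit : ∀ y, P₀ x y =
        (if y ∈ N x then min (((N x).card : ℝ))⁻¹ (π y / (π x * ((N y).card : ℝ))) else 0)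
        + (if y = x then
            1 - ∑ z ∈ N x, min (((N x).card : ℝ))⁻¹ (π z / (π x * ((N z).card : ℝ)))
          else 0) := by
      intro y
      rw [hP0]
      by_cases h1 : y ∈ N x
      · have hyx : y ≠ x := by
          intro h; rw [h] at h1; exact hNirr x h1
        rw [if_pos h1, if_pos h1, if_neg hyx, add_zero]
      · rw [if_neg h1, if_neg h1, zero_add]
    rw [Finset.sum_congr rfl fun y _ => hsplit y, Finset.sum_add_distrib]
    rw [Finset.sum_ite_mem, Finset.univ_inter,
      Finset.sum_ite_eq' Finset.univ x, if_pos (Finset.mem_univ x)]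
    ring
  have hP0rev : ∀ x y, π x * P₀ x y = π y * P₀ y x := by
    intro x y
    by_cases h1 : y ∈ N x
    · have h2 : x ∈ N y := hNsym x y h1
      have hcx : (0:ℝ) < ((N x).card : ℝ) := by
        exact_mod_cast Finset.card_pos.mpr ⟨y, h1⟩
      have hcy : (0:ℝ) < ((N y).card : ℝ) := by
        exact_mod_cast Finset.card_pos.mpr ⟨x, h2⟩
      rw [hP0 x y, if_pos h1, hP0 y x, if_pos h2]
      rw [mul_min_of_nonneg _ _ (hπpos x).le, mul_min_of_nonneg _ _ (hπpos y).le]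
      have e1 : π x * (((N x).card : ℝ))⁻¹ = π x / ((N x).card : ℝ) := by
        rw [div_eq_mul_inv]
      have e2 : π y * (((N y).card : ℝ))⁻¹ = π y / ((N y).card : ℝ) := by
        rw [div_eq_mul_inv]
      have e3 : π x * (π y / (π x * ((N y).card : ℝ))) = π y / ((N y).card : ℝ) := by
        rw [mul_div_assoc', mul_div_mul_left _ _ (ne_of_gt (hπpos x))]
      have e4 : π y * (π x / (π y * ((N x).card : ℝ))) = π x / ((N x).card : ℝ) := by
        rw [mul_div_assoc', mul_div_mul_left _ _ (ne_of_gt (hπpos y))]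
      rw [e1, e2, e3, e4, min_comm]
    · have h2 : x ∉ N y := fun h => h1 (hNsym y x h)
      by_cases h3 : y = x
      · rw [h3]
      · have h4 : x ≠ y := fun h => h3 h.symm
        rw [hP0 x y, if_neg h1, if_neg h3, hP0 y x, if_neg h2, if_neg h4]
        ring
  have hPapply : ∀ x y, P x y = 2⁻¹ * (P₀ x y + if x = y then 1 else 0) := by
    intro x y
    rw [hPdef, lazyM]
    rw [Matrix.smul_apply, Matrix.add_apply, Matrix.one_apply, smul_eq_mul]
  have hPnn : ∀ x y, 0 ≤ P x y := by
    intro x y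
    rw [hPapply]
    have := hP0nn x y
    by_cases h : x = y
    · rw [if_pos h]; linarith
    · rw [if_neg h]; linarith
  have hProw : ∀ x, ∑ y, P x y = 1 := by
    intro x
    rw [Finset.sum_congr rfl fun y _ => hPapply x y, ← Finset.mul_sum,
      Finset.sum_add_distrib, hP0row, Finset.sum_ite_eq Finset.univ x,
      if_pos (Finset.mem_univ x)]
    norm_num
  have hPrev : ∀ x y, π x * P x y = π y * P y x := by
    intro x y
    rw [hPapply, hPapply]
    by_cases h : x = y
    · rw [h]
    · have h' : y ≠ x := fun hh => h hh.symm
      rw [if_neg h, if_neg h']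
      have := hP0rev x y
      ring_nf
      ring_nf at this
      linarith
  have hPstat : ∀ y, ∑ x, π x * P x y = π y := by
    intro y
    have e : ∑ x, π x * P x y = ∑ x, π y * P y x :=
      Finset.sum_congr rfl fun x _ => hPrev x y
    rw [e, ← Finset.mul_sum, hProw, mul_one]
  have hPedge : ∀ z, z ≠ xstar → 1 ≤ 2 * Mr * P z (g z) := by
    intro z hz
    have hgz : g z ∈ N z := hgN z hz
    have hzgz : z ≠ g z := by
      intro h
      have := hNirr z
      rw [← h] at hgz
      exact this hgz
    have hcz : (0:ℝ) < ((N z).card : ℝ) := by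
      exact_mod_cast Finset.card_pos.mpr ⟨g z, hgz⟩
    have hcz1 : (1:ℝ) ≤ ((N z).card : ℝ) := by
      exact_mod_cast Finset.card_pos.mpr ⟨g z, hgz⟩
    have hgzN : z ∈ N (g z) := hNsym z (g z) hgz
    have hcgz : (0:ℝ) < ((N (g z)).card : ℝ) := by
      exact_mod_cast Finset.card_pos.mpr ⟨z, hgzN⟩
    have hmin_eq : P₀ z (g z) = (((N z).card : ℝ))⁻¹ := by
      rw [hP0, if_pos hgz]
      apply min_eq_left
      rw [le_div_iff₀ (mul_pos (hπpos z) hcgz)]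
      have h1 : (((N z).card : ℝ))⁻¹ ≤ 1 := by
        rw [inv_le_one_iff₀]
        right; exact hcz1
      have h2 : π (g z) ≥ R * π z := hgup z hz
      have h3 : ((N (g z)).card : ℝ) ≤ Mr := hMcard (g z)
      have h4 : (((N z).card : ℝ))⁻¹ * (π z * ((N (g z)).card : ℝ)) ≤
          π z * ((N (g z)).card : ℝ) := by
        apply mul_le_of_le_one_left (mul_nonneg (hπpos z).le hcgz.le) h1
      have h5 : π z * ((N (g z)).card : ℝ) ≤ π z * R := by
        apply mul_le_mul_of_nonneg_left _ (hπpos z).le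
        linarith
      have h6 : π z * R = R * π z := mul_comm _ _
      linarith
    have hPval : P z (g z) = 2⁻¹ * (((N z).card : ℝ))⁻¹ := by
      rw [hPapply, if_neg hzgz, add_zero, hmin_eq]
    rw [hPval]
    have hcM : ((N z).card : ℝ) ≤ Mr := hMcard z
    have : ((N z).card : ℝ) * (((N z).card : ℝ))⁻¹ = 1 := mul_inv_cancel₀ (ne_of_gt hcz)
    calc (1:ℝ) = ((N z).card : ℝ) * (((N z).card : ℝ))⁻¹ := this.symm
      _ ≤ Mr * (((N z).card : ℝ))⁻¹ := by
          exact mul_le_mul_of_nonneg_right hcM (inv_nonneg.mpr hcz.le)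
      _ = 2 * Mr * (2⁻¹ * (((N z).card : ℝ))⁻¹) := by ring
  -- spectral parameter l = ρ^{-1/2}
  set l : ℝ := ρ ^ (-(2:ℝ)⁻¹) with hldef
  have hl0 : 0 < l := Real.rpow_pos_of_pos hρpos _
  have hl1 : l < 1 := Real.rpow_lt_one_of_one_lt_of_neg hρ (by norm_num)
  have hll : l * l = ρ⁻¹ := by
    rw [hldef, ← Real.rpow_add hρpos]
    rw [show -(2:ℝ)⁻¹ + -(2:ℝ)⁻¹ = -1 by norm_num]
    exact Real.rpow_neg_one ρ
  have hmuρ : l⁻¹ * ρ⁻¹ = l := by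
    rw [← hll]
    field_simp
  have h1l : 0 < 1 - l := by linarith
  have hinv1 : 1 ≤ (1 - l)⁻¹ := by
    rw [one_le_inv_iff₀]
    constructor
    · exact h1l
    · linarith
  have hmaster := aux_master π P g T xstar Mr ρ l hπpos hπsum hl0 hl1 hmuρ hρinv_pos
    hgfix hTspec hTcard hsumpre hPnn hPrev hPedge hMpos hglt
  set K : ℝ := (1 - l)⁻¹ * (1 - l)⁻¹ * (2 * Mr) with hKdef
  have hKpos : 0 < K := by
    rw [hKdef]
    have := inv_pos.mpr h1l
    positivity
  have hK2 : 2 ≤ K := by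
    rw [hKdef]
    have huu : (1:ℝ) * 1 ≤ (1 - l)⁻¹ * (1 - l)⁻¹ :=
      mul_le_mul hinv1 hinv1 (by norm_num) (by linarith only [hinv1])
    have hM2 : (2:ℝ) * 1 ≤ 2 * Mr := by linarith only [hM1]
    calc (2:ℝ) = (1 * 1) * (2 * 1) := by norm_num
      _ ≤ ((1 - l)⁻¹ * (1 - l)⁻¹) * (2 * Mr) := by
          apply mul_le_mul huu hM2 (by norm_num) (by linarith only [huu])
  have hcFun : cFun ρ = 4 / (1 - l) ^ 3 := by
    rw [cFun, hldef]
  have hcpos : 0 < cFun ρ := by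
    rw [hcFun]
    positivity
  have h2K : 2 * K ≤ cFun ρ * Mr := by
    rw [hcFun, hKdef, div_eq_mul_inv, ← inv_pow]
    have hu := hinv1
    set u : ℝ := (1 - l)⁻¹ with hudef
    have hu0 : 0 < u := inv_pos.mpr h1l
    have huu : (0:ℝ) ≤ u * u := mul_nonneg hu0.le hu0.le
    have h5 : u * u * 1 ≤ u * u * u := mul_le_mul_of_nonneg_left hu huu
    have hMr4 : (0:ℝ) ≤ 4 * Mr := by linarith only [hMpos]
    calc 2 * (u * u * (2 * Mr)) = (4 * Mr) * (u * u * 1) := by ring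
      _ ≤ (4 * Mr) * (u * u * u) := mul_le_mul_of_nonneg_left h5 hMr4
      _ = 4 * u ^ 3 * Mr := by ring
  have hcMpos : 0 < cFun ρ * Mr := mul_pos hcpos hMpos
  refine ⟨hpart1, ?_, ?_⟩
  · -- Part (ii) : spectral gap bound
    rw [specGap]
    apply le_csInf
    · obtain ⟨x₂, hx₂⟩ := hx2
      refine ⟨_, ⟨(fun y => if y = xstar then (1:ℝ) else 0), ?_, rfl⟩⟩
      have hpos : 0 < ∑ x, ∑ y,
          ((if x = xstar then (1:ℝ) else 0) - (if y = xstar then (1:ℝ) else 0)) ^ 2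
            * π x * π y := by
        apply Finset.sum_pos'
        · intro x _
          apply Finset.sum_nonneg
          intro y _
          exact mul_nonneg (mul_nonneg (sq_nonneg _) (hπpos x).le) (hπpos y).le
        · refine ⟨xstar, Finset.mem_univ _, ?_⟩
          apply Finset.sum_pos'
          · intro y _
            exact mul_nonneg (mul_nonneg (sq_nonneg _) (hπpos xstar).le) (hπpos y).le
          · refine ⟨x₂, Finset.mem_univ _, ?_⟩
            rw [if_pos rfl, if_neg hx₂]
            have h := mul_pos (hπpos xstar) (hπpos x₂)
            have e : ((1:ℝ) - 0)^2 * π xstar * π x₂ = π xstar * π x₂ := by ring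
            rw [e]
            exact h
      positivity
    · rintro r ⟨f, hne, rfl⟩
      have hVnn : 0 ≤ 2⁻¹ * ∑ x, ∑ y, (f x - f y) ^ 2 * π x * π y := by
        apply mul_nonneg (by norm_num)
        apply Finset.sum_nonneg
        intro x _
        apply Finset.sum_nonneg
        intro y _
        exact mul_nonneg (mul_nonneg (sq_nonneg _) (hπpos x).le) (hπpos y).le
      have hVpos : 0 < 2⁻¹ * ∑ x, ∑ y, (f x - f y) ^ 2 * π x * π y :=
        lt_of_le_of_ne hVnn (Ne.symm hne)
      have hmf := hmaster f
      have hEpos : (2⁻¹ * ∑ x, ∑ y, (f x - f y) ^ 2 * π x * π y) / K ≤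
          2⁻¹ * ∑ x, ∑ y, (f x - f y) ^ 2 * P x y * π x := by
        rw [div_le_iff₀ hKpos]
        calc 2⁻¹ * ∑ x, ∑ y, (f x - f y) ^ 2 * π x * π y
            ≤ K * (2⁻¹ * ∑ x, ∑ y, (f x - f y) ^ 2 * P x y * π x) := hmf
          _ = (2⁻¹ * ∑ x, ∑ y, (f x - f y) ^ 2 * P x y * π x) * K := by ring
      have hKc : K ≤ cFun ρ * Mr := by linarith
      calc 1 / (cFun ρ * Mr) ≤ 1 / K := by
            apply one_div_le_one_div_of_le hKpos hKc
        _ ≤ (2⁻¹ * ∑ x, ∑ y, (f x - f y) ^ 2 * P x y * π x) /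
              (2⁻¹ * ∑ x, ∑ y, (f x - f y) ^ 2 * π x * π y) := by
            rw [div_le_div_iff₀ hKpos hVpos]
            calc 1 * (2⁻¹ * ∑ x, ∑ y, (f x - f y) ^ 2 * π x * π y)
                = 2⁻¹ * ∑ x, ∑ y, (f x - f y) ^ 2 * π x * π y := one_mul _
              _ ≤ K * (2⁻¹ * ∑ x, ∑ y, (f x - f y) ^ 2 * P x y * π x) := hmf
              _ = 2⁻¹ * (∑ x, ∑ y, (f x - f y) ^ 2 * P x y * π x) * K := by ring
  · -- Part (iii) : mixing time bound
    intro ε hε hε2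
    have hπle1 : ∀ x, π x ≤ 1 := by
      intro x
      rw [← hπsum]
      exact Finset.single_le_sum (fun y _ => (hπpos y).le) (Finset.mem_univ x)
    have hpm_le : ∀ x, piMin π ≤ π x := by
      intro x
      exact ciInf_le (Finite.bddBelow_range _) x
    have hpm_pos : 0 < piMin π := by
      obtain ⟨x0, hx0⟩ := Finite.exists_min π
      have h1 : π x0 ≤ piMin π := le_ciInf hx0
      linarith [hπpos x0]
    have hpm1 : piMin π ≤ 1 := by
      obtain ⟨x0⟩ := (inferInstance : Nonempty X)
      exact le_trans (hpm_le x0) (hπle1 x0)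
    have hεpm : 0 < ε * piMin π := mul_pos hε hpm_pos
    have hεpm1 : ε * piMin π < 1 := by
      calc ε * piMin π ≤ ε * 1 := mul_le_mul_of_nonneg_left hpm1 hε.le
        _ = ε := mul_one ε
        _ < 1 := by linarith
    set L : ℝ := Real.log (1 / (ε * piMin π)) with hLdef
    have hL : 0 < L := by
      rw [hLdef]
      apply Real.log_pos
      rw [lt_div_iff₀ hεpm, one_mul]
      exact hεpm1
    -- the one-step quadratic form facts
    set γ : ℝ := K⁻¹ with hγdef
    have hγpos : 0 < γ := inv_pos.mpr hKpos
    have hγhalf : γ ≤ 1/2 := by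
      have h1 : K⁻¹ ≤ 2⁻¹ := by
        apply inv_anti₀ (by norm_num) hK2
      rw [hγdef]
      linarith
    have hP0stat : ∀ y, ∑ x, π x * P₀ x y = π y := by
      intro y
      have e : ∑ x, π x * P₀ x y = ∑ x, π y * P₀ y x :=
        Finset.sum_congr rfl fun x _ => hP0rev x y
      rw [e, ← Finset.mul_sum, hP0row, mul_one]
    have hPface : ∀ (h : X → ℝ) (x : X), ∑ y, P x y * h y
        = 2⁻¹ * ((∑ y, P₀ x y * h y) + h x) := by
      intro h x
      have e : ∀ y, P x y * h y = 2⁻¹ * (P₀ x y * h y) + 2⁻¹ * (if x = y then h y else 0) := by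
        intro y
        rw [hPapply]
        by_cases hxy : x = y
        · rw [if_pos hxy, if_pos hxy]; ring
        · rw [if_neg hxy, if_neg hxy]; ring
      rw [Finset.sum_congr rfl fun y _ => e y, Finset.sum_add_distrib,
        ← Finset.mul_sum, ← Finset.mul_sum, Finset.sum_ite_eq Finset.univ x h,
        if_pos (Finset.mem_univ x)]
      ring
    have hcontr : ∀ h : X → ℝ, ∑ x, π x * (∑ y, P₀ x y * h y) ^ 2 ≤ ∑ x, π x * h x ^ 2 := by
      intro h
      have hx_cs : ∀ x, (∑ y, P₀ x y * h y) ^ 2 ≤ ∑ y, P₀ x y * h y ^ 2 := by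
        intro x
        have hcs := Finset.sum_mul_sq_le_sq_mul_sq Finset.univ
          (fun y => Real.sqrt (P₀ x y)) (fun y => Real.sqrt (P₀ x y) * h y)
        have e1 : ∑ y, Real.sqrt (P₀ x y) * (Real.sqrt (P₀ x y) * h y)
            = ∑ y, P₀ x y * h y := by
          refine Finset.sum_congr rfl fun y _ => ?_
          rw [← mul_assoc]
          congr 1
          exact Real.mul_self_sqrt (hP0nn x y)
        have e2 : ∑ y, Real.sqrt (P₀ x y) ^ 2 = (1:ℝ) := by
          rw [Finset.sum_congr rfl fun y _ => Real.sq_sqrt (hP0nn x y), hP0row]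
        have e3 : ∑ y, (Real.sqrt (P₀ x y) * h y) ^ 2 = ∑ y, P₀ x y * h y ^ 2 := by
          refine Finset.sum_congr rfl fun y _ => ?_
          rw [mul_pow, Real.sq_sqrt (hP0nn x y)]
        rw [e1, e2, e3, one_mul] at hcs
        exact hcs
      calc ∑ x, π x * (∑ y, P₀ x y * h y) ^ 2
          ≤ ∑ x, π x * ∑ y, P₀ x y * h y ^ 2 :=
            Finset.sum_le_sum fun x _ => mul_le_mul_of_nonneg_left (hx_cs x) (hπpos x).le
        _ = ∑ x, ∑ y, π x * P₀ x y * h y ^ 2 := by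
            refine Finset.sum_congr rfl fun x _ => ?_
            rw [Finset.mul_sum]
            exact Finset.sum_congr rfl fun y _ => by ring
        _ = ∑ y, (∑ x, π x * P₀ x y) * h y ^ 2 := by
            rw [Finset.sum_comm]
            exact Finset.sum_congr rfl fun y _ => by rw [Finset.sum_mul]
        _ = ∑ x, π x * h x ^ 2 :=
            Finset.sum_congr rfl fun y _ => by rw [hP0stat]
    have hPSD : ∀ h : X → ℝ,
        ∑ x, π x * (∑ y, P x y * h y) ^ 2 ≤ ∑ x, π x * (h x * ∑ y, P x y * h y) := by
      intro h
      have eL : ∑ x, π x * (∑ y, P x y * h y) ^ 2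
          = 4⁻¹ * (∑ x, π x * (∑ y, P₀ x y * h y) ^ 2)
            + 2⁻¹ * (∑ x, π x * ((∑ y, P₀ x y * h y) * h x))
            + 4⁻¹ * (∑ x, π x * h x ^ 2) := by
        rw [Finset.mul_sum, Finset.mul_sum, Finset.mul_sum, ← Finset.sum_add_distrib,
          ← Finset.sum_add_distrib]
        refine Finset.sum_congr rfl fun x _ => ?_
        rw [hPface h x]
        ring
      have eR : ∑ x, π x * (h x * ∑ y, P x y * h y)
          = 2⁻¹ * (∑ x, π x * ((∑ y, P₀ x y * h y) * h x))
            + 2⁻¹ * (∑ x, π x * h x ^ 2) := by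
        rw [Finset.mul_sum, Finset.mul_sum, ← Finset.sum_add_distrib]
        refine Finset.sum_congr rfl fun x _ => ?_
        rw [hPface h x]
        ring
      rw [eL, eR]
      have := hcontr h
      linarith
    have hgap : ∀ h : X → ℝ, (∑ x, π x * h x) = 0 →
        ∑ x, π x * (h x * ∑ y, P x y * h y) ≤ (1 - γ) * ∑ x, π x * h x ^ 2 := by
      intro h hmean
      have hvar := aux_var π hπsum h
      rw [hmean] at hvar
      have hdir := aux_dirichlet π P hProw hPstat h
      have hmh := hmaster h
      rw [hvar] at hmh
      rw [hdir] at hmh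
      have hmh' : (∑ x, π x * h x ^ 2) ≤
          K * ((∑ x, π x * h x ^ 2) - ∑ x, π x * (h x * ∑ y, P x y * h y)) := by
        have e : (∑ x, π x * h x ^ 2) - (0:ℝ)^2 = ∑ x, π x * h x ^ 2 := by ring
        linarith only [hmh, e]
      have hKγ : γ * K = 1 := inv_mul_cancel₀ (ne_of_gt hKpos)
      have h2 := mul_le_mul_of_nonneg_left hmh' hγpos.le
      have h3 : γ * (K * ((∑ x, π x * h x ^ 2) - ∑ x, π x * (h x * ∑ y, P x y * h y)))
          = (γ * K) * ((∑ x, π x * h x ^ 2) - ∑ x, π x * (h x * ∑ y, P x y * h y)) := by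
        ring
      rw [h3, hKγ, one_mul] at h2
      linarith only [h2, mul_le_mul_of_nonneg_left hmh' hγpos.le]
    have hdec := chain_decay P π γ hπpos hπsum hPnn hProw hPrev (by linarith) hPSD hgap
    set tt : ℕ := ⌊cFun ρ * Mr * L⌋₊ with httdef
    have httle : (tt : ℝ) ≤ cFun ρ * Mr * L := Nat.floor_le (by positivity)
    have httge : cFun ρ * Mr * L - 1 ≤ (tt : ℝ) := by
      have := Nat.lt_floor_add_one (cFun ρ * Mr * L)
      linarith
    -- numeric bound on the decay factor
    have hγ' : (cFun ρ * Mr)⁻¹ * (cFun ρ * Mr) = 1 := inv_mul_cancel₀ (ne_of_gt hcMpos)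
    have h2γ'γ : 2 * (cFun ρ * Mr)⁻¹ ≤ γ := by
      have hdd : (2:ℝ) / (cFun ρ * Mr) ≤ 1 / K := by
        rw [div_le_div_iff₀ hcMpos hKpos]
        linarith
      rw [hγdef]
      rw [div_eq_mul_inv, one_div] at hdd
      exact hdd
    have hexp1 : 1 - γ ≤ Real.exp (-(2 * (cFun ρ * Mr)⁻¹)) := by
      have h := Real.add_one_le_exp (-(2 * (cFun ρ * Mr)⁻¹))
      linarith
    have h1γnn : 0 ≤ 1 - γ := by linarith
    have hpowle : (1 - γ) ^ tt ≤ Real.exp (-(2 * (cFun ρ * Mr)⁻¹)) ^ tt :=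
      pow_le_pow_left₀ h1γnn hexp1 tt
    have hexp2 : Real.exp (-(2 * (cFun ρ * Mr)⁻¹)) ^ tt
        = Real.exp ((tt : ℝ) * -(2 * (cFun ρ * Mr)⁻¹)) :=
      (Real.exp_nat_mul _ tt).symm
    have hargle : (tt : ℝ) * -(2 * (cFun ρ * Mr)⁻¹) ≤ -(2*L) + 2 * (cFun ρ * Mr)⁻¹ := by
      have hγ'pos : 0 < (cFun ρ * Mr)⁻¹ := inv_pos.mpr hcMpos
      have h1 : (cFun ρ * Mr * L - 1) * (2 * (cFun ρ * Mr)⁻¹)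
          ≤ (tt:ℝ) * (2 * (cFun ρ * Mr)⁻¹) :=
        mul_le_mul_of_nonneg_right httge (by positivity)
      have h2 : (cFun ρ * Mr * L - 1) * (2 * (cFun ρ * Mr)⁻¹)
          = 2 * L * ((cFun ρ * Mr)⁻¹ * (cFun ρ * Mr)) - 2 * (cFun ρ * Mr)⁻¹ := by ring
      rw [hγ'] at h2
      have h3 : (tt:ℝ) * -(2 * (cFun ρ * Mr)⁻¹) = -((tt:ℝ) * (2 * (cFun ρ * Mr)⁻¹)) := by
        ring
      rw [h3]
      linarith
    have hexpL : Real.exp (-L) = ε * piMin π := by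
      rw [hLdef, Real.exp_neg, Real.exp_log (by positivity : (0:ℝ) < 1/(ε * piMin π))]
      rw [one_div, inv_inv]
    have hexp3 : Real.exp (-(2*L) + 2 * (cFun ρ * Mr)⁻¹)
        = Real.exp (2 * (cFun ρ * Mr)⁻¹) * (ε * piMin π)^2 := by
      rw [Real.exp_add]
      have e1 : Real.exp (-(2*L)) = (ε * piMin π)^2 := by
        rw [show -(2*L) = -L + -L by ring, Real.exp_add, hexpL]
        ring
      rw [e1]
      ring
    have hexpsmall : Real.exp (2 * (cFun ρ * Mr)⁻¹) ≤ 2 := by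
      have hc4 : 4 ≤ cFun ρ * Mr := by
        have h3 : (1 - l)^3 ≤ 1 := by
          apply pow_le_one₀ (by linarith only [hl1]) (by linarith only [hl0])
        have h4 : 4 ≤ 4 / (1-l)^3 := by
          rw [le_div_iff₀ (by positivity)]
          linarith only [h3]
        calc (4:ℝ) = 4 * 1 := by norm_num
          _ ≤ (4 / (1-l)^3) * Mr := by
              apply mul_le_mul h4 hM1 (by norm_num) (by positivity)
          _ = cFun ρ * Mr := by rw [hcFun]
      have hinvle : (cFun ρ * Mr)⁻¹ ≤ 4⁻¹ := by
        apply inv_anti₀ (by norm_num) hc4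
      have harg : 2 * (cFun ρ * Mr)⁻¹ ≤ 2⁻¹ := by linarith
      calc Real.exp (2 * (cFun ρ * Mr)⁻¹) ≤ Real.exp 2⁻¹ := Real.exp_le_exp.mpr harg
        _ ≤ 2 := by
            have h := Real.exp_one_lt_d9
            have hsq : Real.exp 2⁻¹ ^ 2 = Real.exp 1 := by
              rw [← Real.exp_nat_mul]
              norm_num
            have h2 : Real.exp 2⁻¹ ^ 2 < 2 ^ 2 := by
              rw [hsq]
              norm_num at h ⊢
              linarith only [h]
            exact (lt_of_pow_lt_pow_left₀ 2 (by norm_num) h2).le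
    have htv : ∀ x : X, tvDist (fun y => (P ^ tt) x y) π ≤ ε := by
      intro x
      rw [tvDist]
      apply ciSup_le
      intro A
      have hb := hdec tt x A
      have hle1 : (1 - γ) ^ tt * (π x)⁻¹ ≤ (2*ε)^2 := by
        have hπxinv : (π x)⁻¹ ≤ (piMin π)⁻¹ := inv_anti₀ hpm_pos (hpm_le x)
        have hp1 : (1-γ)^tt ≤ Real.exp (2 * (cFun ρ * Mr)⁻¹) * (ε * piMin π)^2 := by
          calc (1-γ)^tt ≤ Real.exp (-(2 * (cFun ρ * Mr)⁻¹)) ^ tt := hpowle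
            _ = Real.exp ((tt : ℝ) * -(2 * (cFun ρ * Mr)⁻¹)) := hexp2
            _ ≤ Real.exp (-(2*L) + 2 * (cFun ρ * Mr)⁻¹) := Real.exp_le_exp.mpr hargle
            _ = Real.exp (2 * (cFun ρ * Mr)⁻¹) * (ε * piMin π)^2 := hexp3
        have e : (ε * piMin π)^2 * (piMin π)⁻¹ = ε^2 * piMin π := by
          field_simp
        calc (1-γ)^tt * (π x)⁻¹
            ≤ (Real.exp (2 * (cFun ρ * Mr)⁻¹) * (ε * piMin π)^2) * (piMin π)⁻¹ := by
              apply mul_le_mul hp1 hπxinv (inv_nonneg.mpr (hπpos x).le) (by positivity)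
          _ = Real.exp (2 * (cFun ρ * Mr)⁻¹) * ((ε * piMin π)^2 * (piMin π)⁻¹) := by ring
          _ = Real.exp (2 * (cFun ρ * Mr)⁻¹) * (ε^2 * piMin π) := by rw [e]
          _ ≤ 2 * (ε^2 * piMin π) := by
              apply mul_le_mul_of_nonneg_right hexpsmall (by positivity)
          _ ≤ (2*ε)^2 := by
              have h6 : ε^2 * piMin π ≤ ε^2 * 1 :=
                mul_le_mul_of_nonneg_left hpm1 (sq_nonneg ε)
              have h7 : (2*ε)^2 = 4 * ε^2 := by ring
              rw [h7]
              linarith only [h6, sq_nonneg ε]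
      have hsqrtle : Real.sqrt ((1-γ)^tt * (π x)⁻¹) ≤ 2*ε := by
        calc Real.sqrt ((1-γ)^tt * (π x)⁻¹) ≤ Real.sqrt ((2*ε)^2) := Real.sqrt_le_sqrt hle1
          _ = 2*ε := Real.sqrt_sq (by linarith)
      refine le_trans hb ?_
      calc 2⁻¹ * Real.sqrt ((1-γ)^tt * (π x)⁻¹) ≤ 2⁻¹ * (2*ε) :=
            mul_le_mul_of_nonneg_left hsqrtle (by norm_num)
        _ = ε := by ring
    have hmix : mixTime P π ε ≤ tt := by
      rw [mixTime]
      apply Finset.sup_le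
      intro x _
      rw [mixTimeFrom]
      exact Nat.sInf_le (htv x)
    calc (mixTime P π ε : ℝ) ≤ (tt : ℝ) := by exact_mod_cast hmix
      _ ≤ cFun ρ * Mr * L := httle
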